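/- Let W be a real random variable with c ≤ W ≤ C for constants 0 < c ≤ C, and let R be a real random variable with |R| ≤ C_r, with E[W] = 1 and E[W·R] = V. Let (W_1, R_1), …, (W_n, R_n) be i.i.d. copies of (W, R) and define the weighted importance-sampling estimator Ŵ_n = (∑_{i=1}^n W_i R_i)/(∑_{j=1}^n W_j). Then there exists a constant K, depending only on c, C and C_r, such that for all n ≥ 1, |E[Ŵ_n] − V| ≤ K/n. -/

import Mathlib

open MeasureTheory ProbabilityTheory

/-- `O(1/n)` bias of the weighted importance-sampling estimator: for i.i.d. pairs
`(Wᵢ, Rᵢ)` with `c ≤ Wᵢ ≤ C`, `|Rᵢ| ≤ Cr`, `E[Wᵢ] = 1` and `E[Wᵢ Rᵢ] = V`, there is a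
constant `K` depending only on `c, C, Cr` such that
`|E[(∑ Wᵢ Rᵢ)/(∑ Wⱼ)] − V| ≤ K / n` for all `n ≥ 1`. -/
theorem wis_bias_bound (c C Cr : ℝ) (hc : 0 < c) (hcC : c ≤ C) (hCr : 0 ≤ Cr) :
    ∃ K : ℝ, ∀ (Ω : Type) (_ : MeasurableSpace Ω) (P : Measure Ω),
      IsProbabilityMeasure P →
      ∀ (W R : ℕ → Ω → ℝ) (V : ℝ),
        (∀ i, Measurable (W i)) → (∀ i, Measurable (R i)) →
        (∀ i ω, c ≤ W i ω ∧ W i ω ≤ C) →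
        (∀ i ω, |R i ω| ≤ Cr) →
        (∀ i, ∫ ω, W i ω ∂P = 1) →
        (∀ i, ∫ ω, W i ω * R i ω ∂P = V) →
        iIndepFun (fun i ω => (W i ω, R i ω)) P →
        (∀ i, IdentDistrib (fun ω => (W i ω, R i ω)) (fun ω => (W 0 ω, R 0 ω)) P P) →
        ∀ n : ℕ, 1 ≤ n →
          |(∫ ω, (∑ i ∈ Finset.range n, W i ω * R i ω) /
              (∑ j ∈ Finset.range n, W j ω) ∂P) - V| ≤ K / n := by
  refine ⟨C * Cr * (1 + C) / c + C * Cr * (1 + C) ^ 2 / c ^ 2, ?_⟩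
  intro Ω mΩ P hP W R V hWm hRm hWbd hRbd hWint hWRint hindep _hid n hn
  have hC : 0 < C := lt_of_lt_of_le hc hcC
  -- integrability of bounded measurable functions
  have hint : ∀ (f : Ω → ℝ) (M : ℝ), Measurable f → (∀ ω, |f ω| ≤ M) → Integrable f P :=
    fun f M hf hb => (integrable_const M).mono' hf.aestronglyMeasurable
      (Filter.Eventually.of_forall (by simpa using hb))
  have hWabs : ∀ i ω, |W i ω| ≤ C := fun i ω => by
    rw [abs_of_pos (lt_of_lt_of_le hc (hWbd i ω).1)]; exact (hWbd i ω).2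
  have hWR : ∀ i ω, |W i ω * R i ω| ≤ C * Cr := fun i ω => by
    rw [abs_mul]
    exact mul_le_mul (hWabs i ω) (hRbd i ω) (abs_nonneg _) hC.le
  have h1W : ∀ j ω, |1 - W j ω| ≤ 1 + C := fun j ω => by
    have h1 := (hWbd j ω).1; have h2 := (hWbd j ω).2
    rw [abs_le]; constructor <;> nlinarith
  -- c ≤ 1
  have hc1 : c ≤ 1 := by
    have : ∫ ω, c ∂P ≤ ∫ ω, W 0 ω ∂P :=
      integral_mono (integrable_const c) (hint _ C (hWm 0) (hWabs 0))
        (fun ω => (hWbd 0 ω).1)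
    simpa [hWint 0] using this
  set S : Ω → ℝ := fun ω => ∑ j ∈ Finset.range n, W j ω with hSdef
  have hSm : Measurable S := Finset.measurable_sum _ (fun j _ => hWm j)
  have hSlb : ∀ ω, (n : ℝ) * c ≤ S ω := fun ω => by
    calc (n : ℝ) * c = ∑ _j ∈ Finset.range n, c := by
          simp [mul_comm]
      _ ≤ S ω := Finset.sum_le_sum (fun j _ => (hWbd j ω).1)
  have hnpos : (0 : ℝ) < n := by exact_mod_cast hn
  have hncpos : (0 : ℝ) < n * c := mul_pos hnpos hc
  have hSpos : ∀ ω, 0 < S ω := fun ω => lt_of_lt_of_le hncpos (hSlb ω)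
  have hSabs : ∀ ω, |S ω| ≤ n * C := fun ω => by
    rw [abs_of_pos (hSpos ω)]
    calc S ω ≤ ∑ _j ∈ Finset.range n, C := Finset.sum_le_sum (fun j _ => (hWbd j ω).2)
      _ = n * C := by simp [mul_comm]
  set T : Ω → ℝ := fun ω => ∑ i ∈ Finset.range n, W i ω * R i ω with hTdef
  have hTm : Measurable T := Finset.measurable_sum _ (fun i _ => (hWm i).mul (hRm i))
  have hTabs : ∀ ω, |T ω| ≤ n * (C * Cr) := fun ω => by
    calc |T ω| ≤ ∑ i ∈ Finset.range n, |W i ω * R i ω| := Finset.abs_sum_le_sum_abs _ _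
      _ ≤ ∑ _i ∈ Finset.range n, C * Cr := Finset.sum_le_sum (fun i _ => hWR i _)
      _ = n * (C * Cr) := by simp [mul_comm]
  -- the remainder term G
  set G : Ω → ℝ := fun ω => T ω * ((n : ℝ) - S ω) / S ω with hGdef
  have hGm : Measurable G := (hTm.mul (measurable_const.sub hSm)).div hSm
  have hGabs : ∀ ω, |G ω| ≤ (n * (C * Cr)) * (n * (1 + C)) / (n * c) := fun ω => by
    rw [hGdef, abs_div, abs_mul]
    apply div_le_div₀ (by positivity)
    · apply mul_le_mul (hTabs ω) ?_ (abs_nonneg _) (by positivity)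
      calc |(n : ℝ) - S ω| ≤ |(n:ℝ)| + |S ω| := abs_sub _ _
        _ ≤ n + n * C := by
            rw [abs_of_pos hnpos]; exact add_le_add le_rfl (hSabs ω)
        _ = n * (1 + C) := by ring
    · exact hncpos
    · rw [abs_of_pos (hSpos ω)]; exact hSlb ω
  have hGint : Integrable G P := hint G _ hGm hGabs
  -- Step A : ∫ T/S - V = (1/n) * ∫ G
  have hTint : Integrable T P := hint T _ hTm hTabs
  have hET : ∫ ω, T ω ∂P = n * V := by
    show ∫ ω, ∑ i ∈ Finset.range n, W i ω * R i ω ∂P = n * V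
    rw [integral_finset_sum _ (fun i _ => (hint _ (C*Cr) ((hWm i).mul (hRm i)) (hWR i) : Integrable (fun ω => W i ω * R i ω) P))]
    simp [hWRint, mul_comm]
  have stepA : (∫ ω, T ω / S ω ∂P) - V = (1 / n) * ∫ ω, G ω ∂P := by
    have hpt : ∀ ω, T ω / S ω = (1 / n) * T ω + (1 / n) * G ω := fun ω => by
      have h1 : S ω ≠ 0 := (hSpos ω).ne'
      have h2 : (n : ℝ) ≠ 0 := hnpos.ne'
      rw [hGdef]
      field_simp
      ring
    calc (∫ ω, T ω / S ω ∂P) - V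
        = (∫ ω, (1 / n) * T ω + (1 / n) * G ω ∂P) - V := by
          simp only [hpt]
      _ = (1/n) * (∫ ω, T ω ∂P) + (1/n) * (∫ ω, G ω ∂P) - V := by
          rw [integral_add (hTint.const_mul _) (hGint.const_mul _),
            integral_const_mul, integral_const_mul]
      _ = (1 / n) * ∫ ω, G ω ∂P := by
          rw [hET]; field_simp; ring
  -- Step B : G is a double sum
  set g : ℕ → ℕ → Ω → ℝ := fun i j ω => W i ω * R i ω * (1 - W j ω) / S ω with hgdef
  have hgm : ∀ i j, Measurable (g i j) := fun i j =>
    (((hWm i).mul (hRm i)).mul (measurable_const.sub (hWm j))).div hSm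
  have hgabs : ∀ i j ω, |g i j ω| ≤ C * Cr * (1 + C) / (n * c) := fun i j ω => by
    rw [hgdef, abs_div, abs_mul]
    apply div_le_div₀ (by positivity)
    · exact mul_le_mul (hWR i ω) (h1W j ω) (abs_nonneg _) (by positivity)
    · exact hncpos
    · rw [abs_of_pos (hSpos ω)]; exact hSlb ω
  have hgint : ∀ i j, Integrable (g i j) P := fun i j => hint _ _ (hgm i j) (hgabs i j)
  have stepB : ∫ ω, G ω ∂P
      = ∑ i ∈ Finset.range n, ∑ j ∈ Finset.range n, ∫ ω, g i j ω ∂P := by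
    have hpt : ∀ ω, G ω = ∑ i ∈ Finset.range n, ∑ j ∈ Finset.range n, g i j ω := fun ω => by
      simp only [hGdef, hgdef]
      have : (n : ℝ) - S ω = ∑ j ∈ Finset.range n, (1 - W j ω) := by
        simp [hSdef, Finset.sum_sub_distrib]
      rw [this, hTdef, Finset.sum_mul_sum]
      simp only [Finset.sum_div]
    rw [integral_congr_ae (Filter.Eventually.of_forall hpt),
      integral_finset_sum _ (fun i _ => integrable_finset_sum _ (fun j _ => hgint i j))]
    exact Finset.sum_congr rfl (fun i _ => integral_finset_sum _ (fun j _ => hgint i j))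
  -- diagonal bound
  have hdiag : ∀ i, |∫ ω, g i i ω ∂P| ≤ C * Cr * (1 + C) / (n * c) := fun i => by
    have := norm_integral_le_of_norm_le_const (μ := P) (f := g i i)
      (C := C * Cr * (1 + C) / (n * c)) (Filter.Eventually.of_forall (fun ω => by
        simpa using hgabs i i ω))
    simpa using this
  -- off-diagonal bound
  have hoff : ∀ i j, i ∈ Finset.range n → j ∈ Finset.range n → i ≠ j →
      |∫ ω, g i j ω ∂P| ≤ C * Cr * (1 + C) ^ 2 / (n * c) ^ 2 := by
    intro i j hi hj hij
    set e : Finset ℕ := (Finset.range n).erase j with hedef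
    have hie : i ∈ e := Finset.mem_erase.2 ⟨hij, hi⟩
    set S' : Ω → ℝ := fun ω => ∑ k ∈ e, W k ω with hS'def
    have hS'm : Measurable S' := Finset.measurable_sum _ (fun k _ => hWm k)
    have hSS' : ∀ ω, S ω = W j ω + S' ω := fun ω =>
      (Finset.add_sum_erase _ _ hj).symm
    have hS'lb : ∀ ω, (n : ℝ) * c ≤ S' ω + 1 := fun ω => by
      have hcard : (e.card : ℝ) = (n : ℝ) - 1 := by
        rw [hedef, Finset.card_erase_of_mem hj, Finset.card_range]
        have : (1:ℕ) ≤ n := hn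
        push_cast [Nat.cast_sub this]
        ring
      have h1 : ((n : ℝ) - 1) * c ≤ S' ω := by
        calc ((n:ℝ) - 1) * c = ∑ _k ∈ e, c := by
              rw [Finset.sum_const, nsmul_eq_mul, hcard]
          _ ≤ S' ω := Finset.sum_le_sum (fun k _ => (hWbd k ω).1)
      nlinarith
    have hS'pos : ∀ ω, 0 < S' ω + 1 := fun ω => lt_of_lt_of_le hncpos (hS'lb ω)
    set φ : Ω → ℝ := fun ω => W i ω * R i ω / (S' ω + 1) with hφdef
    have hφm : Measurable φ := ((hWm i).mul (hRm i)).div (hS'm.add measurable_const)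
    have hφabs : ∀ ω, |φ ω| ≤ C * Cr / (n * c) := fun ω => by
      rw [hφdef, abs_div]
      apply div_le_div₀ (by positivity) (hWR i ω) hncpos
      rw [abs_of_pos (hS'pos ω)]; exact hS'lb ω
    set ψ : Ω → ℝ := fun ω => W i ω * R i ω * (1 - W j ω) ^ 2 / (S ω * (S' ω + 1))
      with hψdef
    have hψm : Measurable ψ :=
      (((hWm i).mul (hRm i)).mul ((measurable_const.sub (hWm j)).pow measurable_const)).div
        (hSm.mul (hS'm.add measurable_const))
    have hψabs : ∀ ω, |ψ ω| ≤ C * Cr * (1 + C) ^ 2 / (n * c) ^ 2 := fun ω => by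
      rw [hψdef, abs_div, abs_mul]
      apply div_le_div₀ (by positivity)
      · apply mul_le_mul (hWR i ω) ?_ (abs_nonneg _) (by positivity)
        rw [abs_pow]
        exact pow_le_pow_left₀ (abs_nonneg _) (h1W j ω) 2
      · positivity
      · rw [abs_mul, abs_of_pos (hSpos ω), abs_of_pos (hS'pos ω), sq]
        exact mul_le_mul (hSlb ω) (hS'lb ω) hncpos.le ((hSpos ω).le)
    -- pointwise decomposition
    have hpt : ∀ ω, g i j ω = (1 - W j ω) * φ ω + ψ ω := fun ω => by
      have alg : ∀ A w s : ℝ, w + s ≠ 0 → s + 1 ≠ 0 →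
          A * (1 - w) / (w + s)
            = (1 - w) * (A / (s + 1)) + A * (1 - w) ^ 2 / ((w + s) * (s + 1)) := by
        intro A w s h1 h2; field_simp; ring
      have h1 : W j ω + S' ω ≠ 0 := by rw [← hSS' ω]; exact (hSpos ω).ne'
      have h2 : S' ω + 1 ≠ 0 := (hS'pos ω).ne'
      simp only [hgdef, hφdef, hψdef]
      rw [hSS' ω]
      exact alg (W i ω * R i ω) (W j ω) (S' ω) h1 h2
    -- independence of W j and φ
    set X : ℕ → Ω → ℝ × ℝ := fun k ω => (W k ω, R k ω) with hXdef
    have hXm : ∀ k, Measurable (X k) := fun k => (hWm k).prodMk (hRm k)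
    have hdisj : Disjoint ({j} : Finset ℕ) e := by
      simp [hedef, Finset.disjoint_left]
    have hI := hindep.indepFun_finset {j} e hdisj hXm
    set F : (↥({j} : Finset ℕ) → ℝ × ℝ) → ℝ :=
      fun x => 1 - (x ⟨j, Finset.mem_singleton_self j⟩).1 with hFdef
    set Gf : (↥e → ℝ × ℝ) → ℝ :=
      fun x => (x ⟨i, hie⟩).1 * (x ⟨i, hie⟩).2 / ((∑ k, (x k).1) + 1) with hGfdef
    have hFm : Measurable F :=
      measurable_const.sub ((measurable_pi_apply _).fst)
    have hGfm : Measurable Gf := by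
      apply Measurable.div
      · exact ((measurable_pi_apply _).fst.mul ((measurable_pi_apply _).snd))
      · exact (Finset.measurable_sum Finset.univ
          (fun k _ => (measurable_pi_apply k).fst)).add measurable_const
    have hIndep2 : IndepFun (fun ω => 1 - W j ω) φ P := by
      have h2 := hI.comp hFm hGfm
      have e1 : (F ∘ fun ω (k : ↥({j} : Finset ℕ)) => X k ω) = fun ω => 1 - W j ω := rfl
      have e2 : (Gf ∘ fun ω (k : ↥e) => X k ω) = φ := by
        funext ω
        show W i ω * R i ω / ((∑ k : ↥e, W k.1 ω) + 1) = φ ω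
        rw [hφdef]
        congr 1
        rw [Finset.sum_coe_sort e (fun k => W k ω)]
      rwa [e1, e2] at h2
    have hmulint : Integrable (fun ω => (1 - W j ω) * φ ω) P :=
      hint _ ((1 + C) * (C * Cr / (n * c)))
        ((measurable_const.sub (hWm j)).mul hφm)
        (fun ω => by
          rw [abs_mul]
          exact mul_le_mul (h1W j ω) (hφabs ω) (abs_nonneg _) (by positivity))
    have hzero : ∫ ω, (1 - W j ω) * φ ω ∂P = 0 := by
      have hmul := hIndep2.integral_mul_eq_mul_integral
        (hint _ (1 + C) (measurable_const.sub (hWm j)) (h1W j)).aestronglyMeasurable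
        (hint _ _ hφm hφabs).aestronglyMeasurable
      have hmul' : ∫ ω, (1 - W j ω) * φ ω ∂P
          = (∫ ω, (1 - W j ω) ∂P) * ∫ ω, φ ω ∂P := hmul
      have hz : ∫ ω, (1 - W j ω) ∂P = 0 := by
        rw [integral_sub (integrable_const 1) (hint _ C (hWm j) (hWabs j))]
        simp [hWint j]
      rw [hmul', hz, zero_mul]
    have hsplit : ∫ ω, g i j ω ∂P = ∫ ω, ψ ω ∂P := by
      rw [integral_congr_ae (Filter.Eventually.of_forall hpt),
        integral_add hmulint (hint _ _ hψm hψabs), hzero, zero_add]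
    rw [hsplit]
    have := norm_integral_le_of_norm_le_const (μ := P) (f := ψ)
      (C := C * Cr * (1 + C) ^ 2 / (n * c) ^ 2)
      (Filter.Eventually.of_forall (fun ω => by simpa using hψabs ω))
    simpa using this
  -- combine
  have hsum : |∑ i ∈ Finset.range n, ∑ j ∈ Finset.range n, ∫ ω, g i j ω ∂P|
      ≤ n * (C * Cr * (1 + C) / (n * c) + n * (C * Cr * (1 + C) ^ 2 / (n * c) ^ 2)) := by
    have hrow : ∀ i ∈ Finset.range n,
        |∑ j ∈ Finset.range n, ∫ ω, g i j ω ∂P|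
          ≤ C * Cr * (1 + C) / (n * c) + n * (C * Cr * (1 + C) ^ 2 / (n * c) ^ 2) := by
      intro i hi
      rw [← Finset.add_sum_erase _ _ hi]
      refine le_trans (abs_add_le _ _) (add_le_add (hdiag i) ?_)
      refine le_trans (Finset.abs_sum_le_sum_abs _ _) ?_
      refine le_trans (Finset.sum_le_sum (fun j hj =>
        hoff i j hi (Finset.mem_of_mem_erase hj)
          (fun h => (Finset.ne_of_mem_erase hj) h.symm))) ?_
      rw [Finset.sum_const, Finset.card_erase_of_mem hi, Finset.card_range]
      have : ((n - 1 : ℕ) : ℝ) ≤ (n : ℝ) := by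
        exact_mod_cast Nat.sub_le n 1
      calc (n-1:ℕ) • (C * Cr * (1 + C) ^ 2 / (↑n * c) ^ 2)
          = ((n-1:ℕ):ℝ) * (C * Cr * (1 + C) ^ 2 / (↑n * c) ^ 2) := by
            rw [nsmul_eq_mul]
        _ ≤ n * (C * Cr * (1 + C) ^ 2 / (n * c) ^ 2) := by
            apply mul_le_mul_of_nonneg_right this (by positivity)
    calc |∑ i ∈ Finset.range n, ∑ j ∈ Finset.range n, ∫ ω, g i j ω ∂P|
        ≤ ∑ i ∈ Finset.range n, |∑ j ∈ Finset.range n, ∫ ω, g i j ω ∂P| :=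
          Finset.abs_sum_le_sum_abs _ _
      _ ≤ ∑ _i ∈ Finset.range n,
            (C * Cr * (1 + C) / (n * c) + n * (C * Cr * (1 + C) ^ 2 / (n * c) ^ 2)) :=
          Finset.sum_le_sum hrow
      _ = n * (C * Cr * (1 + C) / (n * c) + n * (C * Cr * (1 + C) ^ 2 / (n * c) ^ 2)) := by
          rw [Finset.sum_const, Finset.card_range, nsmul_eq_mul]
  show |(∫ ω, T ω / S ω ∂P) - V| ≤ _
  rw [stepA, abs_mul, abs_of_pos (by positivity : (0:ℝ) < 1/(n:ℝ))]
  calc (1/(n:ℝ)) * |∫ ω, G ω ∂P|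
      ≤ (1/(n:ℝ)) * (n * (C * Cr * (1 + C) / (n * c) + n * (C * Cr * (1 + C) ^ 2 / (n * c) ^ 2))) := by
        apply mul_le_mul_of_nonneg_left _ (by positivity)
        rw [stepB]; exact hsum
    _ = (C * Cr * (1 + C) / c + C * Cr * (1 + C) ^ 2 / c ^ 2) / n := by
        field_simp
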